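/- The logarithm of the stabilizer norm lower-bounds the log-free robustness of magic: for every n-qubit state ρ that admits at least one finite decomposition ρ = Σ_i x_i |ψ_i⟩⟨ψ_i| with real coefficients x_i and pure stabilizer states |ψ_i⟩, one has ln D(ρ) ≤ LR(ρ). -/

import Mathlib

open Matrix Complex BigOperators
open scoped ComplexOrder

noncomputable section

/-- Index type for `n` qubits: functions `Fin n → Fin 2` (cardinality `2^n`). -/
abbrev QIdx (n : ℕ) := Fin n → Fin 2

/-- The four single-qubit Pauli matrices: `σ⁰ = I`, `σ¹ = σˣ`, `σ² = σᶻ`, `σ³ = σʸ`. -/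
def pauliMat : Fin 4 → Matrix (Fin 2) (Fin 2) ℂ
  | 0 => 1
  | 1 => !![0, 1; 1, 0]
  | 2 => !![1, 0; 0, -1]
  | 3 => !![0, -Complex.I; Complex.I, 0]

/-- The Pauli string `σ^{a_1} ⊗ ⋯ ⊗ σ^{a_n}` as a `2^n × 2^n` matrix. -/
def pauliString {n : ℕ} (a : Fin n → Fin 4) : Matrix (QIdx n) (QIdx n) ℂ :=
  fun i j => ∏ k, pauliMat (a k) (i k) (j k)

/-- An `n`-qubit state: positive semidefinite with unit trace. -/
def IsState {n : ℕ} (ρ : Matrix (QIdx n) (QIdx n) ℂ) : Prop :=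
  ρ.PosSemidef ∧ ρ.trace = 1

/-- The `α`-moment of the Pauli spectrum `A_α(ρ) = 2^{-n} ∑_P |tr(ρP)|^{2α}`. -/
def Amom {n : ℕ} (α : ℝ) (ρ : Matrix (QIdx n) (QIdx n) ℂ) : ℝ :=
  ((2:ℝ)^n)⁻¹ * ∑ a : Fin n → Fin 4, (‖(ρ * pauliString a).trace‖) ^ (2 * α)

/-- The 2-Rényi entropy `S₂(ρ) = -ln tr(ρ²)`. -/
def S2 {n : ℕ} (ρ : Matrix (QIdx n) (QIdx n) ℂ) : ℝ :=
  - Real.log ((ρ * ρ).trace.re)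

/-- The magic witness `W_α(ρ) = (1/(1-α)) ln A_α(ρ) - ((1-2α)/(1-α)) S₂(ρ)`. -/
def Wit {n : ℕ} (α : ℝ) (ρ : Matrix (QIdx n) (QIdx n) ℂ) : ℝ :=
  (1 / (1 - α)) * Real.log (Amom α ρ) - ((1 - 2*α)/(1 - α)) * S2 ρ

/-- The stabilizer norm `D(ρ) = A_{1/2}(ρ) = 2^{-n} ∑_P |tr(ρP)|`. -/
def Dnorm {n : ℕ} (ρ : Matrix (QIdx n) (QIdx n) ℂ) : ℝ :=
  Amom (1/2) ρ

/-- A Clifford unitary: unitary mapping every Pauli string to `±` a Pauli string. -/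
def IsCliffordUnitary {n : ℕ} (U : Matrix (QIdx n) (QIdx n) ℂ) : Prop :=
  U ∈ Matrix.unitaryGroup (QIdx n) ℂ ∧
    ∀ a : Fin n → Fin 4, ∃ (b : Fin n → Fin 4) (ε : ℝ),
      (ε = 1 ∨ ε = -1) ∧ U * pauliString a * Uᴴ = (ε : ℂ) • pauliString b

/-- The computational all-zeros basis vector `|0⟩^{⊗n}`. -/
def zeroVec (n : ℕ) : QIdx n → ℂ :=
  fun i => if (∀ k, i k = 0) then 1 else 0

/-- A pure stabilizer state vector: `U|0⟩^{⊗n}` for a Clifford unitary `U`. -/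
def IsPureStab {n : ℕ} (ψ : QIdx n → ℂ) : Prop :=
  ∃ U, IsCliffordUnitary U ∧ ψ = U.mulVec (zeroVec n)

/-- The rank-one projector `|ψ⟩⟨ψ|`. -/
def proj {n : ℕ} (ψ : QIdx n → ℂ) : Matrix (QIdx n) (QIdx n) ℂ :=
  Matrix.vecMulVec ψ (star ψ)

/-- A mixed stabilizer state: a finite convex combination of pure stabilizer projectors. -/
def IsMixedStab {n : ℕ} (ρ : Matrix (QIdx n) (QIdx n) ℂ) : Prop :=
  ∃ (k : ℕ) (p : Fin k → ℝ) (ψ : Fin k → QIdx n → ℂ),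
    (∀ i, 0 ≤ p i) ∧ (∑ i, p i = 1) ∧ (∀ i, IsPureStab (ψ i)) ∧
    ρ = ∑ i, (p i : ℂ) • proj (ψ i)

/-- The set of values `ln ∑ᵢ |xᵢ|` over finite real stabilizer decompositions of `ρ`. -/
def StabDecomps {n : ℕ} (ρ : Matrix (QIdx n) (QIdx n) ℂ) : Set ℝ :=
  { r | ∃ (k : ℕ) (x : Fin k → ℝ) (ψ : Fin k → QIdx n → ℂ),
      (∀ i, IsPureStab (ψ i)) ∧ ρ = ∑ i, (x i : ℂ) • proj (ψ i) ∧
      r = Real.log (∑ i, |x i|) }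

/-- The log-free robustness of magic. -/
def LR {n : ℕ} (ρ : Matrix (QIdx n) (QIdx n) ℂ) : ℝ := sInf (StabDecomps ρ)

open Classical in
/-- Positive-semidefinite square root (junk value `0` off the PSD cone). -/
def psdSqrt {n : ℕ} (A : Matrix (QIdx n) (QIdx n) ℂ) : Matrix (QIdx n) (QIdx n) ℂ :=
  if h : A.PosSemidef then
    (h.1.eigenvectorUnitary : Matrix (QIdx n) (QIdx n) ℂ) *
      diagonal ((↑) ∘ Real.sqrt ∘ h.1.eigenvalues) *
      (star h.1.eigenvectorUnitary : Matrix (QIdx n) (QIdx n) ℂ)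
  else 0

/-- The Uhlmann fidelity `F(ρ,σ) = (tr √(√ρ σ √ρ))²`. -/
def fidelity {n : ℕ} (ρ σ : Matrix (QIdx n) (QIdx n) ℂ) : ℝ :=
  ((psdSqrt (psdSqrt ρ * σ * psdSqrt ρ)).trace.re) ^ 2

/-- The stabilizer fidelity `D_F(ρ) = inf { -ln F(ρ,σ) : σ a mixed stabilizer state }`. -/
def DF {n : ℕ} (ρ : Matrix (QIdx n) (QIdx n) ℂ) : ℝ :=
  sInf { r | ∃ σ, IsMixedStab σ ∧ r = - Real.log (fidelity ρ σ) }

/-- Filtered Pauli moment `Ã_α(ρ) = (2^n A_α(ρ) - 1)/(2^n - 1)`. -/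
def Atil {n : ℕ} (α : ℝ) (ρ : Matrix (QIdx n) (QIdx n) ℂ) : ℝ :=
  ((2:ℝ)^n * Amom α ρ - 1) / ((2:ℝ)^n - 1)

/-- Filtered stabilizer norm `D̃(ρ) = (2^n D(ρ) - 1)/(2^n - 1)`. -/
def Dtil {n : ℕ} (ρ : Matrix (QIdx n) (QIdx n) ℂ) : ℝ :=
  ((2:ℝ)^n * Dnorm ρ - 1) / ((2:ℝ)^n - 1)

/-- Filtered magic witness `W̃_α(ρ) = (1/(1-α)) ln Ã_α(ρ) + ((1-2α)/(1-α)) ln Ã₁(ρ)`. -/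
def Wtil {n : ℕ} (α : ℝ) (ρ : Matrix (QIdx n) (QIdx n) ℂ) : ℝ :=
  (1/(1-α)) * Real.log (Atil α ρ) + ((1 - 2*α)/(1-α)) * Real.log (Atil 1 ρ)

/-- The maximally mixed state `I/2^n`. -/
def maxMixed (n : ℕ) : Matrix (QIdx n) (QIdx n) ℂ := ((2:ℂ)^n)⁻¹ • 1

/-- The single-qubit T-state vector `|T⟩ = (|0⟩ + e^{-iπ/4}|1⟩)/√2`. -/
def Tket : QIdx 1 → ℂ :=
  fun i => if i 0 = 0 then (Real.sqrt 2 : ℂ)⁻¹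
           else Complex.exp (-(Real.pi/4 : ℂ) * Complex.I) * (Real.sqrt 2 : ℂ)⁻¹

/-- The depolarized T-state `ρ_p = (1-p)|T⟩⟨T| + p·I₂/2`. -/
def rhoDep (p : ℝ) : Matrix (QIdx 1) (QIdx 1) ℂ :=
  ((1 - p : ℝ) : ℂ) • proj Tket + ((p : ℝ) : ℂ) • (((2:ℂ))⁻¹ • 1)


-- aux lemma 1: single qubit paulis hermitian & trace orthogonality
lemma pauliMat_herm (s : Fin 4) : (pauliMat s)ᴴ = pauliMat s := by
  fin_cases s <;> simp [pauliMat] <;>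
    ext i j <;> fin_cases i <;> fin_cases j <;>
      simp [Matrix.conjTranspose_apply]

lemma pauliMat_trace_mul (s t : Fin 4) :
    (pauliMat s * pauliMat t).trace = if s = t then 2 else 0 := by
  fin_cases s <;> fin_cases t <;>
    simp [pauliMat, Matrix.trace_fin_two, Matrix.mul_apply, Fin.sum_univ_two,
      Matrix.one_apply] <;> ring_nf <;> simp [Complex.I_sq] <;> norm_num
/-- Explicit equivalence `(γ → α) × (γ → β) ≃ (γ → α × β)`. -/
def pairFunEquiv (α β γ : Type*) : (γ → α) × (γ → β) ≃ (γ → α × β) where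
  toFun p := fun c => (p.1 c, p.2 c)
  invFun f := (fun c => (f c).1, fun c => (f c).2)
  left_inv p := rfl
  right_inv f := rfl

lemma sum_prod_fun {n : ℕ} (g : Fin n → Fin 2 → Fin 2 → ℂ) :
    ∑ i : QIdx n, ∑ j : QIdx n, ∏ k, g k (i k) (j k) = ∏ k, ∑ s, ∑ t, g k s t := by
  calc ∑ i : QIdx n, ∑ j : QIdx n, ∏ k, g k (i k) (j k)
      = ∑ p : QIdx n × QIdx n, ∏ k, g k (p.1 k) (p.2 k) := (Fintype.sum_prod_type (fun p : QIdx n × QIdx n => ∏ k, g k (p.1 k) (p.2 k))).symm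
    _ = ∑ x : Fin n → Fin 2 × Fin 2, ∏ k, g k (x k).1 (x k).2 :=
        Fintype.sum_equiv (pairFunEquiv (Fin 2) (Fin 2) (Fin n)) _ _
          (fun p => rfl)
    _ = ∏ k, ∑ pr : Fin 2 × Fin 2, g k pr.1 pr.2 := by
        rw [Finset.prod_univ_sum]; simp
    _ = ∏ k, ∑ s, ∑ t, g k s t := by
        exact Finset.prod_congr rfl fun k _ => Fintype.sum_prod_type _

lemma pauliString_trace_mul {n : ℕ} (a b : Fin n → Fin 4) :
    (pauliString a * pauliString b).trace = if a = b then (2:ℂ)^n else 0 := by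
  have key : (pauliString a * pauliString b).trace
      = ∏ k, (pauliMat (a k) * pauliMat (b k)).trace := by
    have h1 : (pauliString a * pauliString b).trace
        = ∑ i : QIdx n, ∑ j : QIdx n, ∏ k, (pauliMat (a k) (i k) (j k) * pauliMat (b k) (j k) (i k)) := by
      simp only [Matrix.trace, Matrix.diag, Matrix.mul_apply, pauliString]
      refine Finset.sum_congr rfl fun i _ => Finset.sum_congr rfl fun j _ => ?_
      rw [← Finset.prod_mul_distrib]
    rw [h1, sum_prod_fun (fun k s t => pauliMat (a k) s t * pauliMat (b k) t s)]
    refine Finset.prod_congr rfl fun k _ => ?_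
    simp [Matrix.trace, Matrix.diag, Matrix.mul_apply]
  rw [key]
  by_cases h : a = b
  · subst h; simp [pauliMat_trace_mul]
  · obtain ⟨k, hk⟩ := Function.ne_iff.mp h
    rw [if_neg h]
    exact Finset.prod_eq_zero (Finset.mem_univ k) (by simp [pauliMat_trace_mul, hk])
lemma proj_mulVec {n : ℕ} (U : Matrix (QIdx n) (QIdx n) ℂ) (v : QIdx n → ℂ) :
    proj (U.mulVec v) = U * proj v * Uᴴ := by
  ext i j
  simp [proj, Matrix.vecMulVec_apply, Matrix.mul_apply, Matrix.mulVec,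
    dotProduct, Matrix.conjTranspose_apply, Finset.sum_mul, Finset.mul_sum]
  refine Finset.sum_congr rfl fun k _ => Finset.sum_congr rfl fun l _ => ?_
  ring

lemma trace_proj_mul {n : ℕ} (v : QIdx n → ℂ) (M : Matrix (QIdx n) (QIdx n) ℂ) :
    (proj v * M).trace = ∑ i, ∑ j, v i * (starRingEnd ℂ) (v j) * M j i := by
  simp [Matrix.trace, Matrix.diag, Matrix.mul_apply, proj, Matrix.vecMulVec_apply,
    mul_assoc]

lemma zeroVec_eq {n : ℕ} (i : QIdx n) : zeroVec n i = if i = 0 then 1 else 0 := by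
  simp [zeroVec, funext_iff]

lemma trace_proj_zero_mul {n : ℕ} (M : Matrix (QIdx n) (QIdx n) ℂ) :
    (proj (zeroVec n) * M).trace = M 0 0 := by
  rw [trace_proj_mul]
  simp [zeroVec_eq]

lemma sum_abs_pauli_zero (n : ℕ) :
    ∑ a : Fin n → Fin 4, ‖pauliString a 0 0‖ = 2^n := by
  have h : ∀ a : Fin n → Fin 4, ‖pauliString a 0 0‖
      = ∏ k, ‖pauliMat (a k) 0 0‖ := by
    intro a; rw [pauliString]; exact norm_prod _ _
  calc ∑ a : Fin n → Fin 4, ‖pauliString a 0 0‖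
      = ∑ a : Fin n → Fin 4, ∏ k, ‖pauliMat (a k) 0 0‖ :=
        Finset.sum_congr rfl fun a _ => h a
    _ = ∏ _k : Fin n, ∑ s : Fin 4, ‖pauliMat s 0 0‖ := by
        rw [Finset.prod_univ_sum]; simp
    _ = 2^n := by
        have : ∑ s : Fin 4, ‖pauliMat s 0 0‖ = 2 := by
          rw [Fin.sum_univ_four]
          norm_num [pauliMat, Matrix.one_apply]
        rw [this]; simp
lemma sum_abs_trace_proj_stab {n : ℕ} {ψ : QIdx n → ℂ} (h : IsPureStab ψ) :
    ∑ a : Fin n → Fin 4, ‖(proj ψ * pauliString a).trace‖ = 2^n := by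
  obtain ⟨U, hU, rfl⟩ := h
  have hUU : Uᴴ * U = 1 := by
    have := hU.1.1
    rwa [Matrix.star_eq_conjTranspose] at this
  choose b ε hsign heq using hU.2
  -- b is injective, hence bijective
  have hinj : Function.Injective b := by
    intro a a' hbb
    by_contra hne
    have h1 : ((U * pauliString a * Uᴴ) * (U * pauliString a' * Uᴴ)).trace
        = (pauliString a * pauliString a').trace := by
      have hm : (U * pauliString a * Uᴴ) * (U * pauliString a' * Uᴴ)
          = U * (pauliString a * pauliString a') * Uᴴ := by
        simp only [Matrix.mul_assoc]
        rw [show Uᴴ * (U * (pauliString a' * Uᴴ)) = pauliString a' * Uᴴ by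
          rw [← Matrix.mul_assoc, hUU, one_mul]]
      rw [hm, Matrix.trace_mul_cycle U _ Uᴴ, ← Matrix.mul_assoc, hUU, one_mul]
    rw [heq a, heq a', hbb] at h1
    rw [pauliString_trace_mul, if_neg hne] at h1
    rw [Matrix.smul_mul, Matrix.mul_smul, Matrix.trace_smul, Matrix.trace_smul,
      pauliString_trace_mul, if_pos rfl] at h1
    have hε : ε a ≠ 0 := by rcases hsign a with h' | h' <;> rw [h'] <;> norm_num
    have hε' : ε a' ≠ 0 := by rcases hsign a' with h' | h' <;> rw [h'] <;> norm_num
    simp only [smul_eq_mul] at h1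
    have h2 : ((ε a : ℂ)) * ((ε a' : ℂ) * (2:ℂ)^n) ≠ 0 := by
      apply mul_ne_zero (by exact_mod_cast hε) (mul_ne_zero (by exact_mod_cast hε') ?_)
      positivity
    exact h2 h1
  have hbij : Function.Bijective b := Finite.injective_iff_bijective.mp hinj
  let e : (Fin n → Fin 4) ≃ (Fin n → Fin 4) := Equiv.ofBijective b hbij
  rw [← Equiv.sum_comp e (fun a => ‖(proj (U.mulVec (zeroVec n)) * pauliString a).trace‖)]
  have key : ∀ c, ‖(proj (U.mulVec (zeroVec n)) * pauliString (b c)).trace‖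
      = ‖pauliString c 0 0‖ := by
    intro c
    have hP : pauliString (b c) = (ε c : ℂ) • (U * pauliString c * Uᴴ) := by
      rw [heq c, smul_smul]
      have : (ε c : ℂ) * (ε c : ℂ) = 1 := by
        rcases hsign c with h' | h' <;> rw [h'] <;> norm_num
      rw [this, one_smul]
    rw [proj_mulVec, hP, Matrix.mul_smul, Matrix.trace_smul]
    have hm : (U * proj (zeroVec n) * Uᴴ) * (U * pauliString c * Uᴴ)
        = U * (proj (zeroVec n) * pauliString c) * Uᴴ := by
      simp only [Matrix.mul_assoc]
      rw [show Uᴴ * (U * (pauliString c * Uᴴ)) = pauliString c * Uᴴ by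
        rw [← Matrix.mul_assoc, hUU, one_mul]]
    rw [hm, Matrix.trace_mul_cycle U _ Uᴴ, ← Matrix.mul_assoc, hUU, one_mul,
      trace_proj_zero_mul]
    simp only [smul_eq_mul, norm_mul, Complex.norm_real]
    rcases hsign c with h' | h' <;> rw [h'] <;> norm_num
  refine (Finset.sum_congr rfl fun c _ => ?_).trans (sum_abs_pauli_zero n)
  exact key c
lemma pauliString_zero {n : ℕ} : pauliString (fun _ => (0 : Fin 4)) = (1 : Matrix (QIdx n) (QIdx n) ℂ) := by
  ext i j
  simp only [pauliString, pauliMat, Matrix.one_apply]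
  by_cases h : i = j
  · subst h; simp
  · rw [if_neg h]
    obtain ⟨k, hk⟩ := Function.ne_iff.mp h
    exact Finset.prod_eq_zero (Finset.mem_univ k) (by simp [Matrix.one_apply, hk])

lemma Dnorm_eq {n : ℕ} (ρ : Matrix (QIdx n) (QIdx n) ℂ) :
    Dnorm ρ = ((2:ℝ)^n)⁻¹ * ∑ a : Fin n → Fin 4, ‖(ρ * pauliString a).trace‖ := by
  simp only [Dnorm, Amom]
  norm_num

/-- the log of the stabilizer norm lower-bounds the log-free
robustness of magic: `ln D(ρ) ≤ LR(ρ)` for states admitting a stabilizer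
decomposition. -/
theorem log_stabNorm_le_LR {n : ℕ} (ρ : Matrix (QIdx n) (QIdx n) ℂ)
    (hρ : IsState ρ) (hdec : (StabDecomps ρ).Nonempty) :
    Real.log (Dnorm ρ) ≤ LR ρ := by
  have h2n : (0:ℝ) < (2:ℝ)^n := by positivity
  -- positivity of the stabilizer norm
  have hone : (1:ℝ) ≤ ∑ a : Fin n → Fin 4, ‖(ρ * pauliString a).trace‖ := by
    have h := Finset.single_le_sum
      (f := fun a : Fin n → Fin 4 => ‖(ρ * pauliString a).trace‖)
      (fun a _ => norm_nonneg _) (Finset.mem_univ (fun _ => (0 : Fin 4)))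
    simpa [pauliString_zero, hρ.2] using h
  have hDpos : 0 < Dnorm ρ := by
    rw [Dnorm_eq]
    exact mul_pos (by positivity) (lt_of_lt_of_le one_pos hone)
  refine le_csInf hdec ?_
  rintro r ⟨k, x, ψ, hstab, hdecomp, rfl⟩
  -- main bound : Dnorm ρ ≤ ∑ |x i|
  have htr : ∀ a, (ρ * pauliString a).trace
      = ∑ i, (x i : ℂ) * (proj (ψ i) * pauliString a).trace := by
    intro a
    rw [hdecomp, Finset.sum_mul]
    simp [Matrix.smul_mul, Matrix.trace_smul, smul_eq_mul]
  have hbound : ∑ a : Fin n → Fin 4, ‖(ρ * pauliString a).trace‖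
      ≤ (2:ℝ)^n * ∑ i, |x i| := by
    calc ∑ a : Fin n → Fin 4, ‖(ρ * pauliString a).trace‖
        ≤ ∑ a : Fin n → Fin 4, ∑ i, |x i| * ‖(proj (ψ i) * pauliString a).trace‖ := by
          refine Finset.sum_le_sum fun a _ => ?_
          rw [htr a]
          refine (norm_sum_le _ _).trans_eq ?_
          refine Finset.sum_congr rfl fun i _ => ?_
          rw [norm_mul, Complex.norm_real, Real.norm_eq_abs]
      _ = ∑ i, |x i| * ∑ a : Fin n → Fin 4, ‖(proj (ψ i) * pauliString a).trace‖ := by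
          rw [Finset.sum_comm]
          exact Finset.sum_congr rfl fun i _ => (Finset.mul_sum _ _ _).symm
      _ = ∑ i, |x i| * (2:ℝ)^n := by
          refine Finset.sum_congr rfl fun i _ => ?_
          rw [sum_abs_trace_proj_stab (hstab i)]
      _ = (2:ℝ)^n * ∑ i, |x i| := by rw [← Finset.sum_mul, mul_comm]
  have hDS : Dnorm ρ ≤ ∑ i, |x i| := by
    rw [Dnorm_eq]
    calc ((2:ℝ)^n)⁻¹ * ∑ a : Fin n → Fin 4, ‖(ρ * pauliString a).trace‖
        ≤ ((2:ℝ)^n)⁻¹ * ((2:ℝ)^n * ∑ i, |x i|) := by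
          exact mul_le_mul_of_nonneg_left hbound (by positivity)
      _ = ∑ i, |x i| := by field_simp
  exact Real.log_le_log hDpos hDS
end
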